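/- With notation as before, suppose G : M → N has a left adjoint K and N has binary coproducts. Then the forgetful functor Gl(α) → N has a left adjoint, sending B ∈ N to (K B, F K B ⊔ B, i₁, [α_{KB}, η_B]), where i₁ is the coproduct injection and η is the unit of the adjunction K ⊣ G. -/

import Mathlib

open CategoryTheory Category Limits

universe v u

variable {M : Type u} [Category.{v} M] {N : Type u} [Category.{v} N]

/-- The bigluing category `Gl(α)` of a natural transformation `α : F ⟶ G`. -/
structure Biglue (F G : M ⥤ N) (α : F ⟶ G) where
  pt : M
  nt : N
  φ : F.obj pt ⟶ nt
  γ : nt ⟶ G.obj pt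
  fac : φ ≫ γ = α.app pt

namespace Biglue

variable {F G : M ⥤ N} {α : F ⟶ G}

@[ext]
structure Hom (A B : Biglue F G α) where
  μ : A.pt ⟶ B.pt
  ν : A.nt ⟶ B.nt
  comm₁ : A.φ ≫ ν = F.map μ ≫ B.φ
  comm₂ : A.γ ≫ G.map μ = ν ≫ B.γ

instance : CategoryStruct (Biglue F G α) where
  Hom := Hom
  id A := ⟨𝟙 _, 𝟙 _, by simp, by simp⟩
  comp {A B C} f g :=
    ⟨f.μ ≫ g.μ, f.ν ≫ g.ν, by
      rw [← Category.assoc, f.comm₁, Category.assoc, g.comm₁, ← Category.assoc, ← F.map_comp], by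
      rw [G.map_comp, ← Category.assoc, f.comm₂, Category.assoc, g.comm₂, ← Category.assoc]⟩

@[simp] lemma id_μ (A : Biglue F G α) : Hom.μ (𝟙 A) = 𝟙 A.pt := rfl
@[simp] lemma id_ν (A : Biglue F G α) : Hom.ν (𝟙 A) = 𝟙 A.nt := rfl
@[simp] lemma comp_μ {A B C : Biglue F G α} (f : A ⟶ B) (g : B ⟶ C) :
    (f ≫ g).μ = f.μ ≫ g.μ := rfl
@[simp] lemma comp_ν {A B C : Biglue F G α} (f : A ⟶ B) (g : B ⟶ C) :
    (f ≫ g).ν = f.ν ≫ g.ν := rfl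

instance : Category (Biglue F G α) where
  id_comp f := Hom.ext (by simp) (by simp)
  comp_id f := Hom.ext (by simp) (by simp)
  assoc f g h := Hom.ext (by simp) (by simp)

/-- The forgetful functor `Gl(α) ⥤ N`. -/
def forgetN (F G : M ⥤ N) (α : F ⟶ G) : Biglue F G α ⥤ N where
  obj A := A.nt
  map f := f.ν
  map_id _ := rfl
  map_comp _ _ := rfl

/-- The object `(K B, F K B ⊔ B, i₁, [α_{KB}, η_B])` of `Gl(α)`, where `K ⊣ G`
with unit `η` and `N` has binary coproducts. -/
noncomputable def KtilObj [HasBinaryCoproducts N] (K : N ⥤ M) (adjKG : K ⊣ G) (B : N) :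
    Biglue F G α where
  pt := K.obj B
  nt := F.obj (K.obj B) ⨿ B
  φ := coprod.inl
  γ := coprod.desc (α.app (K.obj B)) (adjKG.unit.app B)
  fac := by exact coprod.inl_desc _ _

end Biglue

section Aux

variable {F G : M ⥤ N} {α : F ⟶ G} [HasBinaryCoproducts N] (K : N ⥤ M) (adjKG : K ⊣ G)

/-- The left adjoint functor `B ↦ (K B, F K B ⊔ B, i₁, [α_{KB}, η_B])`. -/
noncomputable def Biglue.Ktil : N ⥤ Biglue F G α where
  obj B := Biglue.KtilObj K adjKG B
  map {B B'} f :=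
    { μ := K.map f
      ν := coprod.map (F.map (K.map f)) f
      comm₁ := by simp [Biglue.KtilObj]
      comm₂ := by
        apply coprod.hom_ext
        · simp only [Biglue.KtilObj, coprod.inl_desc_assoc, coprod.map_desc, coprod.inl_desc]
          exact (α.naturality (K.map f)).symm
        · simp only [Biglue.KtilObj, coprod.inr_desc_assoc, coprod.map_desc, coprod.inr_desc]
          simpa using (adjKG.unit.naturality f).symm
           }
  map_id B := Biglue.Hom.ext (by simp [Biglue.KtilObj]) (by
    apply coprod.hom_ext <;> simp [Biglue.KtilObj])
  map_comp f g := Biglue.Hom.ext (by simp [Biglue.KtilObj]) (by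
    apply coprod.hom_ext <;> simp [Biglue.KtilObj])

/-- The hom equivalence for the adjunction `Ktil ⊣ forgetN`. -/
noncomputable def Biglue.ktilHomEquiv (B : N) (A : Biglue F G α) :
    ((Biglue.Ktil (α := α) K adjKG).obj B ⟶ A) ≃ (B ⟶ A.nt) where
  toFun g := coprod.inr ≫ g.ν
  invFun f :=
    { μ := (adjKG.homEquiv B A.pt).symm (f ≫ A.γ)
      ν := coprod.desc (F.map ((adjKG.homEquiv B A.pt).symm (f ≫ A.γ)) ≫ A.φ) f
      comm₁ := by simp [Biglue.Ktil, Biglue.KtilObj]; exact coprod.inl_desc _ _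
      comm₂ := by
        apply coprod.hom_ext
        · simp only [Biglue.Ktil, Biglue.KtilObj, coprod.inl_desc_assoc, Category.assoc,
            coprod.inl_desc]
          rw [A.fac]
          exact (α.naturality _).symm
        · simp only [Biglue.Ktil, Biglue.KtilObj, coprod.inr_desc_assoc, Category.assoc,
            coprod.inr_desc]
          rw [← Adjunction.homEquiv_unit, Equiv.apply_symm_apply] }
  left_inv g := by
    apply Biglue.Hom.ext
    · dsimp only
      erw [Category.assoc, ← g.comm₂]
      simp only [Biglue.Ktil, Biglue.KtilObj, coprod.inr_desc_assoc]
      rw [← Adjunction.homEquiv_unit, Equiv.symm_apply_apply]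
    · apply coprod.hom_ext
      · dsimp only
        erw [Category.assoc, ← g.comm₂]
        simp only [Biglue.Ktil, Biglue.KtilObj, coprod.inl_desc, coprod.inr_desc_assoc]
        rw [← Adjunction.homEquiv_unit, Equiv.symm_apply_apply]
        exact g.comm₁.symm
      · simp; exact coprod.inr_desc _ _
  right_inv f := by simp; exact coprod.inr_desc _ _

/-- The adjunction `Ktil ⊣ forgetN`. -/
noncomputable def Biglue.ktilAdj : Biglue.Ktil (α := α) K adjKG ⊣ Biglue.forgetN F G α :=
  Adjunction.mkOfHomEquiv
    { homEquiv := Biglue.ktilHomEquiv K adjKG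
      homEquiv_naturality_left_symm := by
        intro B' B A f g
        apply Biglue.Hom.ext
        · simp only [Biglue.ktilHomEquiv, Biglue.Ktil, Equiv.coe_fn_symm_mk, comp_μ,
            Category.assoc]
          exact (congrArg _ (Category.assoc _ _ _)).trans (adjKG.homEquiv_naturality_left_symm f (g ≫ A.γ))
        · apply coprod.hom_ext
          · simp only [Biglue.ktilHomEquiv, Biglue.Ktil, Equiv.coe_fn_symm_mk, comp_ν,
              coprod.inl_desc, coprod.map_desc, Category.assoc]
            change coprod.inl ≫ coprod.desc (F.map ((adjKG.homEquiv B' A.pt).symm ((f ≫ g) ≫ A.γ)) ≫ A.φ) (f ≫ g) = coprod.inl ≫ coprod.map (F.map (K.map f)) f ≫ coprod.desc (F.map ((adjKG.homEquiv B A.pt).symm (g ≫ A.γ)) ≫ A.φ) g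
            simp [adjKG.homEquiv_naturality_left_symm]
            erw [coprod.inl_desc, coprod.inl_desc]
            exact (congrArg (fun x => F.map x ≫ A.φ) ((congrArg _ (Category.assoc _ _ _)).trans (adjKG.homEquiv_naturality_left_symm f (g ≫ A.γ)))).trans (by rw [F.map_comp, Category.assoc])
          · simp [Biglue.ktilHomEquiv, Biglue.Ktil, Equiv.coe_fn_symm_mk]
            change coprod.inr ≫ coprod.desc (F.map ((adjKG.homEquiv B' A.pt).symm ((f ≫ g) ≫ A.γ)) ≫ A.φ) (f ≫ g) = coprod.inr ≫ coprod.map (F.map (K.map f)) f ≫ coprod.desc (F.map ((adjKG.homEquiv B A.pt).symm (g ≫ A.γ)) ≫ A.φ) g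
            simp
            erw [coprod.inr_desc, coprod.inr_desc]
      homEquiv_naturality_right := by
        intro B A A' g h
        simp [Biglue.ktilHomEquiv, Biglue.forgetN, Equiv.coe_fn_mk]
        change coprod.inr ≫ g.ν ≫ h.ν = (coprod.inr ≫ g.ν) ≫ h.ν
        exact (Category.assoc _ _ _).symm }

end Aux

/-- If `G` has a left adjoint `K` and `N` has binary coproducts, the forgetful
functor `Gl(α) ⥤ N` has a left adjoint, sending `B` to
`(K B, F K B ⊔ B, i₁, [α_{KB}, η_B])`. -/
theorem biglue_forgetN_has_left_adjoint
    (F G : M ⥤ N) (α : F ⟶ G) [HasBinaryCoproducts N]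
    (K : N ⥤ M) (adjKG : K ⊣ G) :
    ∃ L : N ⥤ Biglue F G α,
      Nonempty (L ⊣ Biglue.forgetN F G α) ∧
        ∀ B : N, L.obj B = Biglue.KtilObj (F := F) K adjKG B := by
  exact ⟨Biglue.Ktil K adjKG, ⟨Biglue.ktilAdj K adjKG⟩, fun B => rfl⟩
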